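/- arXiv:1409.2015 — 7 statements merged into one kernel-verified Lean document; each statement's English description precedes it below -/
import Mathlib

section
/- Let φ be a flow on a set X, let B ⊆ X, let τ > 0, and let ρ₀, ρ_τ : X → ℝ. For x ∈ X define ρ(x) = ∫_0^τ χ_B(φ_{-t}(x)) dt, and assume for the given x that t ↦ χ_B(φ_{-t}(x)) is integrable on [0,τ] and ρ(x) ≠ 0. Define the control u : ℝ → X → ℝ by u(s, y) = χ_B(y) · (ρ_τ(φ_{τ-s}(y)) - ρ₀(φ_{-τ}(φ_{τ-s}(y)))) / ρ(φ_{τ-s}(y)). Then ρ₀(φ_{-τ}(x)) + ∫_0^τ u(s, φ_{-(τ-s)}(x)) ds = ρ_τ(x). (The minimum-energy control u_opt(x,s) = χ_B(x) U_{τ-s}((ρ_τ - P_τ ρ₀)/ρ_B^τ)(x) steers the advection equation from ρ₀ to ρ_τ in time τ.) -/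
open MeasureTheory

/-- The minimum-energy control
`u_opt(x,s) = χ_B(x) U_{τ-s}((ρ_τ - P_τ ρ₀)/ρ_B^τ)(x)` steers the advection
equation from the initial state `ρ₀` to the final state `ρ_τ` in time `τ`. -/
theorem minimum_energy_control_steers
    {X : Type*} (φ : ℝ → X → X)
    (hφ0 : ∀ x, φ 0 x = x)
    (hφadd : ∀ s t x, φ (s + t) x = φ s (φ t x))
    (B : Set X) (τ : ℝ) (hτ : 0 < τ) (ρ₀ ρτ : X → ℝ)
    (ρ : X → ℝ) (hρ : ∀ x, ρ x = ∫ t in (0 : ℝ)..τ, B.indicator (fun _ => (1 : ℝ)) (φ (-t) x))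
    (x : X)
    (hint : IntervalIntegrable (fun t => B.indicator (fun _ => (1 : ℝ)) (φ (-t) x))
      volume 0 τ)
    (hρx : ρ x ≠ 0)
    (u : ℝ → X → ℝ)
    (hu : ∀ s y, u s y = B.indicator (fun _ => (1 : ℝ)) y *
      ((ρτ (φ (τ - s) y) - ρ₀ (φ (-τ) (φ (τ - s) y))) / ρ (φ (τ - s) y))) :
    ρ₀ (φ (-τ) x) + ∫ s in (0 : ℝ)..τ, u s (φ (-(τ - s)) x) = ρτ x := by
  have hcomp : ∀ s : ℝ, φ (τ - s) (φ (-(τ - s)) x) = x := by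
    intro s
    rw [← hφadd]
    simp [hφ0]
  have hc : ∀ s : ℝ, u s (φ (-(τ - s)) x)
      = B.indicator (fun _ => (1 : ℝ)) (φ (-(τ - s)) x) * ((ρτ x - ρ₀ (φ (-τ) x)) / ρ x) := by
    intro s
    rw [hu, hcomp]
  have h1 : (∫ s in (0 : ℝ)..τ, u s (φ (-(τ - s)) x))
      = (∫ s in (0 : ℝ)..τ, B.indicator (fun _ => (1 : ℝ)) (φ (-(τ - s)) x))
        * ((ρτ x - ρ₀ (φ (-τ) x)) / ρ x) := by
    rw [← intervalIntegral.integral_mul_const]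
    exact intervalIntegral.integral_congr fun s _ => hc s
  have h2 : (∫ s in (0 : ℝ)..τ, B.indicator (fun _ => (1 : ℝ)) (φ (-(τ - s)) x)) = ρ x := by
    rw [hρ]
    have := intervalIntegral.integral_comp_sub_left
      (a := (0:ℝ)) (b := τ) (fun t => B.indicator (fun _ => (1 : ℝ)) (φ (-t) x)) τ
    simpa using this
  rw [h1, h2]
  field_simp
  ring
end

section
/- Let φ be a flow on a set X, let B ⊆ X, let τ > 0, and for x ∈ X define ρ(x) = ∫_0^τ χ_B(φ_{-t}(x)) dt, assuming for every x that t ↦ χ_B(φ_{-t}(x)) is integrable on [0,τ]. Then for every g : X → ℝ there exists u : ℝ → X → ℝ such that u(s,y) = 0 whenever y ∉ B, and for every x with ρ(x) ≠ 0 one has ∫_0^τ u(s, φ_{-(τ-s)}(x)) ds = g(x). (Exact controllability of the advection equation with volume-preserving velocity field on the reachable set R^τ, where the controllability gramian density ρ is strictly positive.) -/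
open MeasureTheory

/-- Exact controllability of the advection equation with volume-preserving
velocity field on the reachable set `R^τ`, on which the controllability
gramian density `ρ(x) = ∫_0^τ χ_B(φ_{-t}(x)) dt` is strictly positive. -/
theorem exact_controllability_on_reachable_set
    {X : Type*} (φ : ℝ → X → X)
    (hφ0 : ∀ x, φ 0 x = x)
    (hφadd : ∀ s t x, φ (s + t) x = φ s (φ t x))
    (B : Set X) (τ : ℝ) (hτ : 0 < τ)
    (ρ : X → ℝ) (hρ : ∀ x, ρ x = ∫ t in (0 : ℝ)..τ, B.indicator (fun _ => (1 : ℝ)) (φ (-t) x))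
    (hint : ∀ x, IntervalIntegrable (fun t => B.indicator (fun _ => (1 : ℝ)) (φ (-t) x))
      volume 0 τ) :
    ∀ g : X → ℝ, ∃ u : ℝ → X → ℝ,
      (∀ s y, y ∉ B → u s y = 0) ∧
      ∀ x, ρ x ≠ 0 → ∫ s in (0 : ℝ)..τ, u s (φ (-(τ - s)) x) = g x := by
  intro g
  refine ⟨fun s y => B.indicator (fun _ => (1 : ℝ)) y * (g (φ (τ - s) y) / ρ (φ (τ - s) y)),
    fun s y hy => by simp [Set.indicator_of_notMem hy], fun x hx => ?_⟩
  have hback : ∀ a : ℝ, φ a (φ (-a) x) = x := by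
    intro a
    rw [← hφadd, add_neg_cancel, hφ0]
  have h1 : ∀ s : ℝ, B.indicator (fun _ => (1 : ℝ)) (φ (-(τ - s)) x) *
      (g (φ (τ - s) (φ (-(τ - s)) x)) / ρ (φ (τ - s) (φ (-(τ - s)) x))) =
      B.indicator (fun _ => (1 : ℝ)) (φ (-(τ - s)) x) * (g x / ρ x) := by
    intro s; rw [hback]
  calc ∫ s in (0 : ℝ)..τ,
        B.indicator (fun _ => (1 : ℝ)) (φ (-(τ - s)) x) *
          (g (φ (τ - s) (φ (-(τ - s)) x)) / ρ (φ (τ - s) (φ (-(τ - s)) x)))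
      = ∫ s in (0 : ℝ)..τ,
        B.indicator (fun _ => (1 : ℝ)) (φ (-(τ - s)) x) * (g x / ρ x) := by
        simp only [h1]
    _ = (∫ s in (0 : ℝ)..τ, B.indicator (fun _ => (1 : ℝ)) (φ (-(τ - s)) x)) * (g x / ρ x) := by
        rw [intervalIntegral.integral_mul_const]
    _ = ρ x * (g x / ρ x) := by
        congr 1
        rw [hρ x]
        have := intervalIntegral.integral_comp_sub_left
          (a := (0:ℝ)) (b := τ) (fun t => B.indicator (fun _ => (1 : ℝ)) (φ (-t) x)) τ
        simpa using this
    _ = g x := by field_simp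
end

section
/- Let U and H be real Hilbert spaces, let T : U → H be a continuous linear map, and suppose there is a continuous linear equivalence e : H ≃ H whose underlying map equals T ∘ T*, where T* denotes the Hilbert-space adjoint of T. For y ∈ H set u₀ := T*(e⁻¹(y)). Then: (i) T u₀ = y; (ii) for every u ∈ U with T u = y one has ‖u₀‖ ≤ ‖u‖; and (iii) ‖u₀‖² = ⟨y, e⁻¹(y)⟩. (Minimum-energy control: u_opt = B^{τ*}(C_B^τ)^{-1}(ρ_τ - P_τ ρ₀) has minimal norm among all controls achieving the target, with energy ⟨ρ_τ - P_τ ρ₀, (C_B^τ)^{-1}(ρ_τ - P_τ ρ₀)⟩.) -/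
open ContinuousLinearMap

/-- Minimum-energy control: when the gramian `C = T T*` is invertible (as the
continuous linear equivalence `e`), the control `u₀ = T* (e⁻¹ y)` reaches the
target `y`, has minimal norm among all controls reaching `y`, and its energy
is `‖u₀‖² = ⟨y, e⁻¹ y⟩`. -/
theorem minimum_norm_control
    {U H : Type*}
    [NormedAddCommGroup U] [InnerProductSpace ℝ U] [CompleteSpace U]
    [NormedAddCommGroup H] [InnerProductSpace ℝ H] [CompleteSpace H]
    (T : U →L[ℝ] H) (e : H ≃L[ℝ] H)
    (he : (e : H →L[ℝ] H) = T ∘L (ContinuousLinearMap.adjoint T))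
    (y : H) (u₀ : U) (hu₀ : u₀ = (ContinuousLinearMap.adjoint T) (e.symm y)) :
    T u₀ = y ∧
    (∀ u : U, T u = y → ‖u₀‖ ≤ ‖u‖) ∧
    ‖u₀‖ ^ 2 = inner ℝ y (e.symm y) := by
  have hee : ∀ x : H, T ((ContinuousLinearMap.adjoint T) x) = e x := fun x =>
    (ContinuousLinearMap.ext_iff.mp he x).symm
  have hT : T u₀ = y := by rw [hu₀, hee, e.apply_symm_apply]
  have henergy : ‖u₀‖ ^ 2 = inner ℝ y (e.symm y) := by
    calc ‖u₀‖ ^ 2 = inner ℝ u₀ u₀ := (real_inner_self_eq_norm_sq u₀).symm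
    _ = inner ℝ (e.symm y) (T u₀) := by
        nth_rewrite 1 [hu₀]
        rw [ContinuousLinearMap.adjoint_inner_left]
    _ = inner ℝ y (e.symm y) := by rw [hT, real_inner_comm]
  refine ⟨hT, ?_, henergy⟩
  intro u hu
  have horth : inner ℝ u₀ (u - u₀) = (0 : ℝ) := by
    rw [hu₀, ContinuousLinearMap.adjoint_inner_left, map_sub, hu, ← hu₀, hT,
      sub_self, inner_zero_right]
  have key : ‖u‖ ^ 2 = ‖u₀‖ ^ 2 + ‖u - u₀‖ ^ 2 := by
    have h := norm_add_sq_real u₀ (u - u₀)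
    rw [horth] at h
    simpa [add_sub_cancel] using h
  nlinarith [norm_nonneg u₀, norm_nonneg u, sq_nonneg ‖u - u₀‖]
end

section
/- Let φ be a flow on a set X, let v₀ : X → [0,∞] be such that for the given x ∈ X the map s ↦ v₀(φ_s(x)) is measurable on ℝ. Then for every t ≥ 0: ∫⁻_{s ∈ [0,∞)} v₀(φ_{-s}(φ_t(x))) ds = ∫⁻_{s ∈ [0,t]} v₀(φ_s(x)) ds + ∫⁻_{s ∈ [0,∞)} v₀(φ_{-s}(x)) ds. (With v₀ = χ_B this says the infinite-time controllability gramian density ρ_B(x) = ∫_0^∞ P_t χ_B(x) dt satisfies ρ_B(φ_t(x)) - ρ_B(x) = ∫_0^t χ_B(φ_s(x)) ds, the characteristic (weak) form of the steady-state equation ∇·(f ρ_B) = χ_B.) -/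
open MeasureTheory
open scoped ENNReal

/-- The infinite-time controllability gramian density
`ρ_B(x) = ∫_0^∞ P_t χ_B(x) dt` satisfies (with `v₀ = χ_B`) the characteristic
(weak) form `ρ_B(φ_t(x)) = ∫_0^t χ_B(φ_s(x)) ds + ρ_B(x)` of the steady-state
equation `∇·(f ρ_B) = χ_B`. -/
theorem gramian_density_characteristic_identity
    {X : Type*} (φ : ℝ → X → X)
    (hφ0 : ∀ x, φ 0 x = x)
    (hφadd : ∀ s t x, φ (s + t) x = φ s (φ t x))
    (v₀ : X → ℝ≥0∞) (x : X)
    (hmeas : Measurable (fun s : ℝ => v₀ (φ s x))) :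
    ∀ t : ℝ, 0 ≤ t →
      ∫⁻ s in Set.Ici (0 : ℝ), v₀ (φ (-s) (φ t x))
        = (∫⁻ s in Set.Icc (0 : ℝ) t, v₀ (φ s x))
          + ∫⁻ s in Set.Ici (0 : ℝ), v₀ (φ (-s) x) := by
  intro t ht
  set f : ℝ → ℝ≥0∞ := fun s => v₀ (φ s x) with hf
  have h1 : ∀ s : ℝ, v₀ (φ (-s) (φ t x)) = f (t - s) := by
    intro s
    rw [hf, ← hφadd]
    ring_nf
  have h2 : ∀ s : ℝ, v₀ (φ (-s) x) = f (-s) := fun s => rfl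
  simp only [h1, h2]
  -- LHS: substitute u = t - s
  have hsub : MeasurePreserving (fun s : ℝ => t - s) volume volume :=
    Measure.measurePreserving_sub_left volume t
  have hemb : MeasurableEmbedding (fun s : ℝ => t - s) :=
    (MeasurableEquiv.subLeft t).measurableEmbedding
  have hpre : (fun s : ℝ => t - s) ⁻¹' Set.Iic t = Set.Ici (0 : ℝ) := by
    ext s; simp [sub_le_iff_le_add]
  have himg : (fun s : ℝ => t - s) '' Set.Ici (0 : ℝ) = Set.Iic t := by
    ext u
    constructor
    · rintro ⟨s, hs, rfl⟩; simpa using hs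
    · intro hu; exact ⟨t - u, by simpa using hu, by ring⟩
  have hL : ∫⁻ s in Set.Ici (0 : ℝ), f (t - s) = ∫⁻ u in Set.Iic t, f u := by
    rw [← himg]
    exact hsub.setLIntegral_comp_emb hemb f _
  have hneg : MeasurePreserving (fun s : ℝ => -s) volume volume :=
    Measure.measurePreserving_neg volume
  have hembn : MeasurableEmbedding (fun s : ℝ => -s) :=
    (MeasurableEquiv.neg ℝ).measurableEmbedding
  have hpren : (fun s : ℝ => -s) ⁻¹' Set.Iic (0 : ℝ) = Set.Ici (0 : ℝ) := by
    ext s; simp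
  have himgn : (fun s : ℝ => -s) '' Set.Ici (0 : ℝ) = Set.Iic (0 : ℝ) := by
    ext u
    constructor
    · rintro ⟨s, hs, rfl⟩; simpa using hs
    · intro hu; exact ⟨-u, by simpa using hu, by ring⟩
  have hR : ∫⁻ s in Set.Ici (0 : ℝ), f (-s) = ∫⁻ u in Set.Iic (0 : ℝ), f u := by
    rw [← himgn]
    exact hneg.setLIntegral_comp_emb hembn f _
  rw [hL, hR]
  have hunion : Set.Iic t = Set.Ioc 0 t ∪ Set.Iic (0 : ℝ) := by
    rw [Set.union_comm, Set.Iic_union_Ioc_eq_Iic ht]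
  have hdisj : Disjoint (Set.Ioc (0:ℝ) t) (Set.Iic (0:ℝ)) := by
    rw [Set.disjoint_left]
    intro a ha hb
    exact absurd (Set.mem_Iic.mp hb) (not_le.mpr ha.1)
  rw [hunion, lintegral_union measurableSet_Iic hdisj]
  congr 1
  exact setLIntegral_congr Ioc_ae_eq_Icc
end

section
/- Let E be a real normed vector space, f : E → E, and let φ : ℝ → E → E satisfy: for every x ∈ E and t ∈ ℝ, the curve s ↦ φ_s(x) has derivative f(φ_t(x)) at time t. Let v : E → ℝ be differentiable with v(y) ≥ 0 for all y, let v₀ : E → ℝ be continuous with v₀(y) ≥ 0 for all y, and suppose Dv(y)[f(y)] = -v₀(y) for all y ∈ E. Let D ⊆ E be compact with v₀(y) > 0 for all y ∈ D. Then for every x₀ ∈ E it is not the case that φ_t(x₀) ∈ D for all t ≥ 0. (Sufficiency direction of the transport-equation stability criterion: existence of a positive solution v of f · ∇v = -v₀ forbids any forward trajectory from remaining in a region where v₀ is strictly positive.) -/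
open MeasureTheory

/-- Sufficiency direction of the transport-equation stability criterion:
the existence of a positive solution `v` of `f · ∇v = -v₀` forbids any forward
trajectory from remaining in a compact region where `v₀` is strictly positive. -/
theorem transport_solution_forbids_trapped_trajectories
    {E : Type*} [NormedAddCommGroup E] [NormedSpace ℝ E]
    (f : E → E) (φ : ℝ → E → E)
    (hφ0 : ∀ x, φ 0 x = x)
    (hφ : ∀ (x : E) (t : ℝ), HasDerivAt (fun s : ℝ => φ s x) (f (φ t x)) t)
    (v : E → ℝ) (hv : Differentiable ℝ v) (hvpos : ∀ y, 0 ≤ v y)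
    (v₀ : E → ℝ) (hv₀ : Continuous v₀) (hv₀pos : ∀ y, 0 ≤ v₀ y)
    (hpde : ∀ y : E, fderiv ℝ v y (f y) = -v₀ y)
    (D : Set E) (hD : IsCompact D) (hpos : ∀ y ∈ D, 0 < v₀ y) :
    ∀ x₀ : E, ¬ (∀ t : ℝ, 0 ≤ t → φ t x₀ ∈ D) := by
  intro x₀ htrap
  -- D is nonempty since x₀ ∈ D
  have hx₀ : x₀ ∈ D := by simpa [hφ0] using htrap 0 le_rfl
  -- minimum of v₀ on D
  obtain ⟨y₀, hy₀D, hy₀min⟩ := hD.exists_isMinOn ⟨x₀, hx₀⟩ hv₀.continuousOn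
  set ε := v₀ y₀ with hε
  have hεpos : 0 < ε := hpos y₀ hy₀D
  -- derivative of g t = v (φ t x₀)
  set g : ℝ → ℝ := fun t => v (φ t x₀) with hg
  have hg' : ∀ t, HasDerivAt g (-v₀ (φ t x₀)) t := by
    intro t
    have := ((hv (φ t x₀)).hasFDerivAt).comp_hasDerivAt t (hφ x₀ t)
    simp only [hpde (φ t x₀)] at this; exact this
  -- h t = g t + ε t is antitone on [0, ∞)
  set h : ℝ → ℝ := fun t => g t + ε * t with hh
  have hh' : ∀ t, HasDerivAt h (-v₀ (φ t x₀) + ε) t := by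
    intro t
    have h2 := (hg' t).add ((hasDerivAt_id t).const_mul ε); simp at h2; exact h2
  have hanti : AntitoneOn h (Set.Ici (0 : ℝ)) := by
    apply antitoneOn_of_deriv_nonpos (convex_Ici 0)
      (fun t _ => (hh' t).continuousAt.continuousWithinAt)
      (fun t ht => (hh' t).differentiableAt.differentiableWithinAt)
    intro t ht
    rw [(hh' t).deriv]
    have : ε ≤ v₀ (φ t x₀) := hy₀min (htrap t (le_of_lt (by simpa using ht)))
    linarith
  -- choose T large
  set T : ℝ := g 0 / ε + 1 with hT
  have hT0 : (0 : ℝ) ≤ T := by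
    have h1 : 0 ≤ g 0 / ε := div_nonneg (hvpos _) hεpos.le
    rw [hT]; linarith
  have := hanti (Set.self_mem_Ici) hT0 hT0
  have hgT : 0 ≤ g T := hvpos _
  have : g T + ε * T ≤ g 0 := by simpa [hh] using this
  have hεT : ε * T = g 0 + ε := by
    rw [hT]; field_simp
  nlinarith
end

section
/- Let E be a metric space, x* ∈ E, x ∈ E, and let φ : ℝ → E → E satisfy φ_0(x) = x, with t ↦ φ_t(x) continuous and φ_t(x) → x* as t → ∞. Let v₀ : E → ℝ be continuous with v₀(y) ≥ 0 for all y, and suppose there is δ > 0 such that v₀(y) = 0 whenever dist(y, x*) < δ. Then the function t ↦ v₀(φ_t(x)) is Lebesgue integrable on [0,∞); moreover, if v₀(x) > 0 then ∫_{[0,∞)} v₀(φ_t(x)) dt > 0. (Necessity direction of the transport-equation stability criterion: if the equilibrium x* is globally asymptotically stable, then v(x) = ∫_0^∞ v₀(φ_t(x)) dt is a well-defined, positive solution of f · ∇v = -v₀ away from the equilibrium.) -/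
open MeasureTheory Filter

/-- Necessity direction of the transport-equation stability criterion: if the
trajectory of `x` converges to the equilibrium `x*` and `v₀` vanishes on a
`δ`-ball around `x*`, then `v(x) = ∫_0^∞ v₀(φ_t(x)) dt` is well defined, and
positive when `v₀(x) > 0`. -/
theorem transport_solution_well_defined_and_positive
    {E : Type*} [MetricSpace E]
    (xstar : E) (x : E) (φ : ℝ → E → E)
    (hφ0 : φ 0 x = x)
    (hcont : Continuous (fun t : ℝ => φ t x))
    (hconv : Tendsto (fun t : ℝ => φ t x) atTop (nhds xstar))
    (v₀ : E → ℝ) (hv₀ : Continuous v₀) (hv₀nonneg : ∀ y, 0 ≤ v₀ y)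
    (δ : ℝ) (hδ : 0 < δ) (hzero : ∀ y, dist y xstar < δ → v₀ y = 0) :
    IntegrableOn (fun t : ℝ => v₀ (φ t x)) (Set.Ici (0 : ℝ)) volume ∧
      (0 < v₀ x → 0 < ∫ t in Set.Ici (0 : ℝ), v₀ (φ t x)) := by
  set f : ℝ → ℝ := fun t => v₀ (φ t x) with hf
  have hfc : Continuous f := hv₀.comp hcont
  -- find T ≥ 0 with f t = 0 for t ≥ T
  have hev : ∀ᶠ t in atTop, dist (φ t x) xstar < δ :=
    (tendsto_iff_dist_tendsto_zero.mp hconv).eventually (gt_mem_nhds hδ)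
  obtain ⟨T₀, hT₀⟩ := eventually_atTop.mp hev
  set T : ℝ := max T₀ 0 with hT
  have hT0 : (0 : ℝ) ≤ T := le_max_right _ _
  have hzeroT : ∀ t ≥ T, f t = 0 := fun t ht =>
    hzero _ (hT₀ t (le_trans (le_max_left _ _) ht))
  have hint : IntegrableOn f (Set.Ici (0 : ℝ)) volume := by
    have h1 : IntegrableOn f (Set.Icc (0 : ℝ) T) volume :=
      hfc.continuousOn.integrableOn_compact isCompact_Icc
    have h2 : IntegrableOn f (Set.Ici T) volume := by
      apply (integrableOn_congr_fun (g := fun _ => (0 : ℝ)) ?_ measurableSet_Ici).mpr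
      · exact integrableOn_zero
      · intro t ht; exact hzeroT t ht
    have := h1.union h2
    rwa [Set.Icc_union_Ici_eq_Ici hT0] at this
  refine ⟨hint, fun hpos => ?_⟩
  rw [setIntegral_pos_iff_support_of_nonneg_ae
    (Eventually.of_forall fun t => hv₀nonneg _) hint]
  have hf0 : 0 < f 0 := by simpa [f, hφ0] using hpos
  obtain ⟨ε, hε, hball⟩ := Metric.eventually_nhds_iff_ball.mp
    ((hfc.continuousAt (x := 0)).eventually (eventually_gt_nhds hf0))
  have hsub : Set.Ico (0 : ℝ) ε ⊆ Function.support f ∩ Set.Ici 0 := by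
    intro t ht
    refine ⟨ne_of_gt (hball t ?_), ht.1⟩
    simp [Real.dist_eq, abs_of_nonneg ht.1, ht.2]
  calc (0 : ENNReal) < volume (Set.Ico (0 : ℝ) ε) := by
        simp [Real.volume_Ico, hε]
    _ ≤ volume (Function.support f ∩ Set.Ici 0) := measure_mono hsub
end

section
/- Let E be a metric space, x* ∈ E, let φ : ℝ → E → E, and fix x ∈ E with φ_t(x) → x* as t → ∞. Let A ⊆ E and δ > 0 be such that dist(y, x*) ≥ δ for all y ∈ A. Then ∫⁻_{t ∈ [0,∞)} χ_A(φ_t(x)) dt < ∞, where the integral is the Lebesgue lower integral. (Well-definedness of the infinite-time observability gramian: if the advective vector field is globally asymptotically stable, then V(x) = ∫_0^∞ U_t χ_A(x) dt = ∫_0^∞ χ_A(φ_t(x)) dt is finite for sensors located on a set A bounded away from the equilibrium.) -/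
open MeasureTheory Filter
open scoped ENNReal

/-- Well-definedness of the infinite-time observability gramian: if the
trajectory of `x` converges to the equilibrium `x*` (global asymptotic
stability of the advective vector field), then
`V(x) = ∫_0^∞ U_t χ_A(x) dt = ∫_0^∞ χ_A(φ_t(x)) dt` is finite for any sensor
set `A` bounded away from the equilibrium. -/
theorem observability_gramian_finite
    {E : Type*} [MetricSpace E]
    (xstar : E) (φ : ℝ → E → E) (x : E)
    (hconv : Tendsto (fun t : ℝ => φ t x) atTop (nhds xstar))
    (A : Set E) (δ : ℝ) (hδ : 0 < δ) (hA : ∀ y ∈ A, δ ≤ dist y xstar) :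
    ∫⁻ t in Set.Ici (0 : ℝ), A.indicator (fun _ => (1 : ℝ≥0∞)) (φ t x) < ⊤ := by
  have h := Metric.tendsto_nhds.1 hconv δ hδ
  rw [eventually_atTop] at h
  obtain ⟨T, hT⟩ := h
  have hbound : ∀ t : ℝ,
      A.indicator (fun _ => (1 : ℝ≥0∞)) (φ t x) ≤ (Set.Iic T).indicator (fun _ => (1 : ℝ≥0∞)) t := by
    intro t
    by_cases ht : t ≤ T
    · rw [Set.indicator_of_mem (Set.mem_Iic.2 ht)]
      exact Set.indicator_apply_le fun _ => le_rfl
    · rw [Set.indicator_of_notMem (fun h => ht (Set.mem_Iic.1 h))]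
      have : φ t x ∉ A := fun hm => absurd (hA _ hm) (not_le.2 (hT t (le_of_not_ge ht)))
      rw [Set.indicator_of_notMem this]
  calc ∫⁻ t in Set.Ici (0 : ℝ), A.indicator (fun _ => (1 : ℝ≥0∞)) (φ t x)
      ≤ ∫⁻ t in Set.Ici (0 : ℝ), (Set.Iic T).indicator (fun _ => (1 : ℝ≥0∞)) t :=
        lintegral_mono fun t => hbound t
    _ = volume (Set.Icc 0 T) := by
        rw [setLIntegral_indicator measurableSet_Iic, setLIntegral_one, Set.inter_comm,
          Set.Ici_inter_Iic]
    _ < ⊤ := by simp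
end
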